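/- For every N ≥ 1, the word 0·f_1·f_2⋯f_N (the letter 0 followed by the concatenation of the first N finite Fibonacci words) is a prefix of the Fibonacci infinite word f. In other words, f = 0·∏_{n≥1} f_n. -/
import Mathlib


/-- The finite Fibonacci words over the alphabet {0,1}: f 1 = 1, f 2 = 0,
and f n = f (n-1) ++ f (n-2) for n ≥ 3. -/
def fibWord : ℕ → List ℕ
  | 0 => []
  | 1 => [1]
  | 2 => [0]
  | n + 3 => fibWord (n + 2) ++ fibWord (n + 1)

/-- A finite word is a prefix of the Fibonacci infinite word iff it is a
prefix of some finite Fibonacci word f m with m ≥ 2. -/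
def IsFibPrefix (x : List ℕ) : Prop := ∃ m, 2 ≤ m ∧ x <+: fibWord m

lemma fibWord_concat (N : ℕ) (hN : 1 ≤ N) :
    [0] ++ ((List.range N).map (fun i => fibWord (i + 1))).flatten = fibWord (N + 2) := by
  induction N with
  | zero => omega
  | succ n ih =>
    rcases Nat.eq_or_lt_of_le hN with h | h
    · obtain rfl : n = 0 := by omega
      simp [fibWord, List.range_succ]
    · have hn : 1 ≤ n := by omega
      rw [List.range_succ, List.map_append, List.flatten_append, ← List.append_assoc,
        ih hn]
      simp only [List.map_cons, List.map_nil, List.flatten_cons, List.flatten_nil,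
        List.append_nil]
      rfl

theorem stmt0 (N : ℕ) (hN : 1 ≤ N) :
    IsFibPrefix ([0] ++ ((List.range N).map (fun i => fibWord (i + 1))).flatten) := by
  exact ⟨N + 2, by omega, fibWord_concat N hN ▸ List.prefix_refl _⟩
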